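/- Let β ∈ V*, let X ∈ V^k satisfy Ω(X) = β, and let Y ∈ V^k be such that X + Y is a SOPDE-tuple at velocities v. Then there exists Y' ∈ V^k with Ω(Y') = 0 such that X + Y' is a SOPDE-tuple at velocities v, if and only if Ω(Y)(Z) = 0 for every Z ∈ 𝔐. (Pointwise content of the Theorem characterizing the submanifold S_1 where SOPDE solutions of the k-presymplectic Lagrangian equation exist.) -/
import Mathlib


/-- Pointwise content of the Theorem characterizing the submanifold `S_1`
where SOPDE solutions of the k-presymplectic Lagrangian equation exist:
given `Ω(X) = β` and `X + Y` a SOPDE-tuple at velocities `v`, there is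
`Y' ∈ Ker Ω` with `X + Y'` a SOPDE-tuple at `v` iff `Ω(Y)` vanishes on `𝔐`. -/
theorem stmt4 {k n : ℕ} (hk : 1 ≤ k) (hn : 1 ≤ n)
    (ω : Fin k → ((Fin n → ℝ) × (Fin k → Fin n → ℝ)) →ₗ[ℝ]
        ((Fin n → ℝ) × (Fin k → Fin n → ℝ)) →ₗ[ℝ] ℝ)
    (halt : ∀ α z, ω α z z = 0)
    (v : Fin k → Fin n → ℝ)
    (β : ((Fin n → ℝ) × (Fin k → Fin n → ℝ)) →ₗ[ℝ] ℝ)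
    (X Y : Fin k → (Fin n → ℝ) × (Fin k → Fin n → ℝ))
    (hX : ∀ Z, (∑ α, ω α (X α) Z) = β Z)
    (hXY : ∀ α, (X α + Y α).1 = v α) :
    (∃ Y' : Fin k → (Fin n → ℝ) × (Fin k → Fin n → ℝ),
        (∀ Z, (∑ α, ω α (Y' α) Z) = 0) ∧ ∀ α, (X α + Y' α).1 = v α) ↔
    (∀ Z : (Fin n → ℝ) × (Fin k → Fin n → ℝ),
      (∀ U : Fin k → (Fin n → ℝ) × (Fin k → Fin n → ℝ),
        (∀ α, (U α).1 = 0) → (∑ α, ω α (U α) Z) = 0) →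
      (∑ α, ω α (Y α) Z) = 0) := by
  constructor
  · rintro ⟨Y', hY'0, hY'v⟩ Z hZ
    have hfst : ∀ α, (Y α).1 = (Y' α).1 := by
      intro α
      have h1 := hXY α
      have h2 := hY'v α
      have : (X α).1 + (Y α).1 = (X α).1 + (Y' α).1 := by
        simpa [Prod.fst_add] using h1.trans h2.symm
      exact add_left_cancel this
    have hU : ∀ α, (Y α - Y' α).1 = 0 := by
      intro α; simp [Prod.fst_sub, hfst α]
    have hUZ := hZ (fun α => Y α - Y' α) hU
    calc ∑ α, ω α (Y α) Z
        = ∑ α, (ω α (Y' α) Z + ω α (Y α - Y' α) Z) := by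
          refine Finset.sum_congr rfl fun α _ => ?_
          have : Y α = Y' α + (Y α - Y' α) := by abel
          rw [this]; simp
      _ = (∑ α, ω α (Y' α) Z) + ∑ α, ω α (Y α - Y' α) Z := Finset.sum_add_distrib
      _ = 0 := by rw [hY'0 Z, hUZ, add_zero]
  · intro hM
    let L : (Fin k → (Fin k → Fin n → ℝ)) →ₗ[ℝ] (((Fin n → ℝ) × (Fin k → Fin n → ℝ)) →ₗ[ℝ] ℝ) :=
      { toFun := fun w => ∑ α, ω α (0, w α)
        map_add' := by
          intro w w'
          have : ∀ α, ((0, w α + w' α) : (Fin n → ℝ) × (Fin k → Fin n → ℝ)) = (0, w α) + (0, w' α) := by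
            intro α; ext <;> simp
          simp only [Pi.add_apply, this, map_add]
          exact Finset.sum_add_distrib
        map_smul' := by
          intro c w
          have : ∀ α, ((0, c • w α) : (Fin n → ℝ) × (Fin k → Fin n → ℝ)) = c • ((0, w α) : (Fin n → ℝ) × (Fin k → Fin n → ℝ)) := by
            intro α; ext <;> simp
          simp only [Pi.smul_apply, this, map_smul, RingHom.id_apply]
          exact (Finset.smul_sum).symm }
    let F : ((Fin n → ℝ) × (Fin k → Fin n → ℝ)) →ₗ[ℝ] ℝ := ∑ α, ω α (Y α)
    have hFmem : F ∈ LinearMap.range L := by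
      rw [← Subspace.dualCoannihilator_dualAnnihilator_eq (W := LinearMap.range L)]
      rw [Submodule.mem_dualAnnihilator]
      intro Z hZ
      rw [Submodule.mem_dualCoannihilator] at hZ
      have : ∑ α, ω α (Y α) Z = 0 := by
        apply hM Z
        intro U hU
        have hUeq : U = fun α => ((0 : Fin n → ℝ), (U α).2) := by
          funext α; ext
          · simp [hU α]
          · rfl
        have := hZ (L (fun α => (U α).2)) ⟨_, rfl⟩
        simp only [L, LinearMap.coe_mk, AddHom.coe_mk, LinearMap.coe_sum,
          Finset.sum_apply] at this
        rw [hUeq]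
        exact this
      simpa [F] using this
    obtain ⟨w, hw⟩ := hFmem
    refine ⟨fun α => Y α - (0, w α), ?_, ?_⟩
    · intro Z
      have h1 : ∀ α, ω α (Y α - (0, w α)) Z = ω α (Y α) Z - ω α (0, w α) Z := by
        intro α; simp
      rw [Finset.sum_congr rfl fun α _ => h1 α, Finset.sum_sub_distrib]
      have h2 : ∑ α, ω α (0, w α) Z = ∑ α, ω α (Y α) Z := by
        have := congrArg (fun f => f Z) hw
        simpa [L, F] using this
      rw [h2, sub_self]
    · intro α
      have := hXY α
      simp only [Prod.fst_add, Prod.fst_sub] at this ⊢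
      simpa using this
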